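/- For every nonnegative integer n, the quaternion-valued function X ↦ (X⁺)ⁿ on ℍ satisfies ∇□ (X⁺)ⁿ = 0 and (□ (X⁺)ⁿ)⃐∇ = 0; that is, each matrix entry of (X⁺)ⁿ is quasi anti regular from both sides. -/

import Mathlib

noncomputable section

/-- The real quaternions. -/
abbrev Hq := Quaternion ℝ

/-- The quaternionic units `e₀ = 1, e₁, e₂, e₃`. -/
def qe : Fin 4 → Hq := ![1, ⟨0,1,0,0⟩, ⟨0,0,1,0⟩, ⟨0,0,0,1⟩]

/-- Partial derivative `∂/∂zⁱ` of a quaternion-valued function on ℝ⁴. -/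
def pdq (i : Fin 4) (f : (Fin 4 → ℝ) → Hq) : (Fin 4 → ℝ) → Hq :=
  fun x => fderiv ℝ f x (Pi.single i 1)

/-- `∇ = e₀∂₀ − e₁∂₁ − e₂∂₂ − e₃∂₃`. -/
def DMinus (f : (Fin 4 → ℝ) → Hq) : (Fin 4 → ℝ) → Hq :=
  fun x => pdq 0 f x - qe 1 * pdq 1 f x - qe 2 * pdq 2 f x - qe 3 * pdq 3 f x

/-- The four-dimensional Laplacian `□ = ∑ᵢ ∂ᵢ²`. -/
def lapq (f : (Fin 4 → ℝ) → Hq) : (Fin 4 → ℝ) → Hq :=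
  fun x => ∑ i : Fin 4, pdq i (pdq i f) x

/-- The quaternion `Z = z⁰e₀ + z¹e₁ + z²e₂ + z³e₃` attached to a point of ℝ⁴;
its quaternionic conjugate `Z⁺` is `star (Zq x)`. -/
def Zq (x : Fin 4 → ℝ) : Hq := ∑ i : Fin 4, x i • qe i

/-- `∇` applied from the right: `g ∇ = ∂₀g − (∂₁g)e₁ − (∂₂g)e₂ − (∂₃g)e₃`. -/
def DMinusR (f : (Fin 4 → ℝ) → Hq) : (Fin 4 → ℝ) → Hq :=
  fun x => pdq 0 f x - pdq 1 f x * qe 1 - pdq 2 f x * qe 2 - pdq 3 f x * qe 3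

/-! ### Auxiliary development -/

def ee : Fin 4 → Hq := fun i => star (qe i)

theorem ee_def (i : Fin 4) : star (qe i) = ee i := rfl

theorem qe_re (i : Fin 4) : (qe i).re = if i = 0 then 1 else 0 := by fin_cases i <;> rfl
theorem qe_imI (i : Fin 4) : (qe i).imI = if i = 1 then 1 else 0 := by fin_cases i <;> rfl
theorem qe_imJ (i : Fin 4) : (qe i).imJ = if i = 2 then 1 else 0 := by fin_cases i <;> rfl
theorem qe_imK (i : Fin 4) : (qe i).imK = if i = 3 then 1 else 0 := by fin_cases i <;> rfl
theorem ee_re (i : Fin 4) : (ee i).re = (qe i).re := Quaternion.re_star (qe i)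
theorem ee_imI (i : Fin 4) : (ee i).imI = -(qe i).imI := Quaternion.imI_star (qe i)
theorem ee_imJ (i : Fin 4) : (ee i).imJ = -(qe i).imJ := Quaternion.imJ_star (qe i)
theorem ee_imK (i : Fin 4) : (ee i).imK = -(qe i).imK := Quaternion.imK_star (qe i)

/-! #### Differentiation framework -/

def PD (f : (Fin 4 → ℝ) → Hq) (g : (Fin 4 → ℝ) → (Fin 4 → ℝ) → Hq) : Prop :=
  ∀ x, ∃ L : (Fin 4 → ℝ) →L[ℝ] Hq, HasFDerivAt f L x ∧ ⇑L = g x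

theorem PD.pdq_eq {f g} (h : PD f g) (i : Fin 4) (x) :
    pdq i f x = g x (Pi.single i 1) := by
  obtain ⟨L, hL, hLg⟩ := h x
  rw [pdq, hL.fderiv, hLg]

theorem PD.const (c : Hq) : PD (fun _ => c) (fun _ _ => 0) := by
  intro x
  exact ⟨0, hasFDerivAt_const c x, by funext v; simp⟩

theorem PD.mul {f₁ g₁ f₂ g₂} (h₁ : PD f₁ g₁) (h₂ : PD f₂ g₂) :
    PD (fun y => f₁ y * f₂ y) (fun x v => g₁ x v * f₂ x + f₁ x * g₂ x v) := by
  intro x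
  obtain ⟨L₁, hL₁, hg₁⟩ := h₁ x
  obtain ⟨L₂, hL₂, hg₂⟩ := h₂ x
  refine ⟨f₁ x • L₂ + L₁.smulRight (f₂ x), hL₁.mul' hL₂, ?_⟩
  funext v
  simp only [ContinuousLinearMap.add_apply, ContinuousLinearMap.smul_apply,
    ContinuousLinearMap.smulRight_apply, smul_eq_mul, hg₁, hg₂]
  exact add_comm _ _

theorem PD.add {f₁ g₁ f₂ g₂} (h₁ : PD f₁ g₁) (h₂ : PD f₂ g₂) :
    PD (fun y => f₁ y + f₂ y) (fun x v => g₁ x v + g₂ x v) := by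
  intro x
  obtain ⟨L₁, hL₁, hg₁⟩ := h₁ x
  obtain ⟨L₂, hL₂, hg₂⟩ := h₂ x
  exact ⟨L₁ + L₂, hL₁.add hL₂, by funext v; simp [hg₁, hg₂]⟩

theorem PD.smul {f g} (c : ℝ) (h : PD f g) :
    PD (fun y => c • f y) (fun x v => c • g x v) := by
  intro x
  obtain ⟨L, hL, hg⟩ := h x
  exact ⟨c • L, hL.const_smul c, by funext v; simp [hg]⟩

theorem PD.sum {s : Finset ℕ} {f : ℕ → (Fin 4 → ℝ) → Hq}
    {g : ℕ → (Fin 4 → ℝ) → (Fin 4 → ℝ) → Hq}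
    (h : ∀ k ∈ s, PD (f k) (g k)) :
    PD (fun y => ∑ k ∈ s, f k y) (fun x v => ∑ k ∈ s, g k x v) := by
  classical
  induction s using Finset.induction_on with
  | empty => simpa using PD.const 0
  | @insert a s' hk ih =>
    simp only [Finset.sum_insert hk]
    exact (h a (Finset.mem_insert_self a s')).add
      (ih fun k hks => h k (Finset.mem_insert_of_mem hks))

def Zc : (Fin 4 → ℝ) →L[ℝ] Hq :=
  ∑ i : Fin 4, (ContinuousLinearMap.proj i : ((Fin 4 → ℝ)) →L[ℝ] ℝ).smulRight (qe i)

theorem Zc_apply (v : Fin 4 → ℝ) : Zc v = Zq v := by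
  simp [Zc, Zq, ContinuousLinearMap.sum_apply]

theorem PD.z : PD Zq (fun _ v => Zq v) := by
  intro x
  exact ⟨Zc, by
    have : Zq = ⇑Zc := by funext v; rw [Zc_apply]
    rw [this]; exact Zc.hasFDerivAt, funext Zc_apply⟩

def Wc : (Fin 4 → ℝ) →L[ℝ] Hq :=
  ∑ i : Fin 4, (ContinuousLinearMap.proj i : ((Fin 4 → ℝ)) →L[ℝ] ℝ).smulRight (star (qe i))

theorem Wc_apply (v : Fin 4 → ℝ) : Wc v = star (Zq v) := by
  simp [Wc, Zq, ContinuousLinearMap.sum_apply, star_sum, star_smul]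

theorem PD.w : PD (fun y => star (Zq y)) (fun _ v => star (Zq v)) := by
  intro x
  exact ⟨Wc, by
    have : (fun y => star (Zq y)) = ⇑Wc := by funext v; rw [Wc_apply]
    rw [this]; exact Wc.hasFDerivAt, funext Wc_apply⟩

theorem Zq_single (i : Fin 4) : Zq (Pi.single i 1) = qe i := by
  simp [Zq, Pi.single_apply]

theorem PD.congr {f g f' g'} (h : PD f g) (hf : ∀ y, f' y = f y) (hg : ∀ x v, g' x v = g x v) :
    PD f' g' := by
  have hf' : f' = f := funext hf
  have hg' : g' = g := funext fun x => funext (hg x)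
  rw [hf', hg']; exact h

theorem PD.pow {f g} (h : PD f g) (n : ℕ) :
    PD (fun y => f y ^ n)
      (fun x v => ∑ k ∈ Finset.range n, f x ^ k * g x v * f x ^ (n - 1 - k)) := by
  induction n with
  | zero =>
    exact (PD.const 1).congr (fun y => by simp) (fun x v => by simp)
  | succ n ih =>
    refine (ih.mul h).congr (fun y => by rw [pow_succ]) (fun x v => ?_)
    rw [Finset.sum_range_succ]
    congr 1
    · rw [Finset.sum_mul]
      refine Finset.sum_congr rfl fun k hk => ?_
      rw [Finset.mem_range] at hk
      have h1 : n + 1 - 1 - k = n - k := by omega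
      have h2 : n - k = n - 1 - k + 1 := by omega
      rw [h1, h2, pow_succ]
      simp [mul_assoc]
    · simp
theorem sand1 (q : Hq) : ∑ i : Fin 4, ee i * q * ee i = (-2 : ℝ) • star q := by
  simp only [Fin.sum_univ_four]
  ext <;>
    simp [Quaternion.ext_iff, Quaternion.re_mul, Quaternion.imI_mul, Quaternion.imJ_mul,
      Quaternion.imK_mul, ee_re, ee_imI, ee_imJ, ee_imK, qe_re, qe_imI, qe_imJ, qe_imK] <;> ring

theorem sand2 (q : Hq) : ∑ i : Fin 4, ee i * q * qe i = (2 : ℝ) • q + (2 : ℝ) • star q := by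
  simp only [Fin.sum_univ_four]
  ext <;>
    simp [Quaternion.ext_iff, Quaternion.re_mul, Quaternion.imI_mul, Quaternion.imJ_mul,
      Quaternion.imK_mul, ee_re, ee_imI, ee_imJ, ee_imK, qe_re, qe_imI, qe_imJ, qe_imK] <;> ring

theorem sand3 (q : Hq) : ∑ i : Fin 4, qe i * q * ee i = (2 : ℝ) • q + (2 : ℝ) • star q := by
  simp only [Fin.sum_univ_four]
  ext <;>
    simp [Quaternion.ext_iff, Quaternion.re_mul, Quaternion.imI_mul, Quaternion.imJ_mul,
      Quaternion.imK_mul, ee_re, ee_imI, ee_imJ, ee_imK, qe_re, qe_imI, qe_imJ, qe_imK] <;> ring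

theorem gaussR (n : ℕ) : ∑ i ∈ Finset.range n, (i : ℝ) = n * (n - 1) / 2 := by
  induction n with
  | zero => simp
  | succ n ih => rw [Finset.sum_range_succ, ih]; push_cast; ring

/-- swap: ∑_{b<M} a b • ∑_{q<b} V q = ∑_{q<M} (∑_{b∈Ico(q+1),M} a b) • V q -/
theorem swapSum (M : ℕ) (a : ℕ → ℝ) (V : ℕ → Hq) :
    ∑ b ∈ Finset.range M, a b • ∑ q ∈ Finset.range b, V q
      = ∑ q ∈ Finset.range M, (∑ b ∈ Finset.Ico (q+1) M, a b) • V q := by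
  induction M with
  | zero => simp
  | succ M ih =>
    rw [Finset.sum_range_succ, ih, Finset.sum_range_succ]
    have h1 : ∀ q ∈ Finset.range M,
        (∑ b ∈ Finset.Ico (q+1) (M+1), a b) • V q
          = (∑ b ∈ Finset.Ico (q+1) M, a b) • V q + a M • V q := by
      intro q hq
      rw [Finset.mem_range] at hq
      rw [Finset.sum_Ico_succ_top (by omega), add_smul]
    rw [Finset.sum_congr rfl h1, Finset.sum_add_distrib]
    simp [Finset.smul_sum]

theorem count_aux (M : ℕ) (F : ℕ → Hq) :
    ∑ k ∈ Finset.range M, ∑ b ∈ Finset.range k, F b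
      = ∑ b ∈ Finset.range M, ((M - 1 - b : ℕ) : ℝ) • F b := by
  induction M with
  | zero => simp
  | succ M ih =>
    rw [Finset.sum_range_succ, ih, Finset.sum_range_succ]
    have h1 : ∀ b ∈ Finset.range M,
        ((M + 1 - 1 - b : ℕ) : ℝ) • F b = ((M - 1 - b : ℕ) : ℝ) • F b + F b := by
      intro b hb
      rw [Finset.mem_range] at hb
      have h : (M + 1 - 1 - b : ℕ) = (M - 1 - b) + 1 := by omega
      rw [h]; push_cast; rw [add_smul, one_smul]
    rw [Finset.sum_congr rfl h1, Finset.sum_add_distrib]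
    have h2 : ((M + 1 - 1 - M : ℕ) : ℝ) = 0 := by norm_num
    rw [h2, zero_smul, add_zero]

theorem count1 (M : ℕ) (F : ℕ → Hq) :
    ∑ k ∈ Finset.range M, ∑ p ∈ Finset.range k, F (k - 1 - p)
      = ∑ b ∈ Finset.range M, ((M - 1 - b : ℕ) : ℝ) • F b := by
  have h : ∀ k ∈ Finset.range M, ∑ p ∈ Finset.range k, F (k - 1 - p)
      = ∑ p ∈ Finset.range k, F p := fun k _ => Finset.sum_range_reflect F k
  rw [Finset.sum_congr rfl h, count_aux]

theorem count2 (M : ℕ) (F : ℕ → Hq) :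
    ∑ k ∈ Finset.range M, ∑ p ∈ Finset.range (M - 1 - k), F p
      = ∑ b ∈ Finset.range M, ((M - 1 - b : ℕ) : ℝ) • F b := by
  rw [← count_aux M F]
  exact Finset.sum_range_reflect (fun k => ∑ p ∈ Finset.range k, F p) M

theorem key (m : ℕ) (V : ℕ → Hq) :
    ∑ b ∈ Finset.range (m+2), ((m+1-b : ℕ) : ℝ) •
      ((b : ℝ) • V (b-1) + (∑ q ∈ Finset.range b, V q - ∑ p ∈ Finset.range (m-b), V p)) = 0 := by
  set A : ℕ → ℝ := fun b => ((m+1-b : ℕ) : ℝ) with hA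
  have split : ∑ b ∈ Finset.range (m+2), A b •
      ((b : ℝ) • V (b-1) + (∑ q ∈ Finset.range b, V q - ∑ p ∈ Finset.range (m-b), V p))
    = (∑ b ∈ Finset.range (m+2), A b • (b : ℝ) • V (b-1))
      + ((∑ b ∈ Finset.range (m+2), A b • ∑ q ∈ Finset.range b, V q)
        - (∑ b ∈ Finset.range (m+2), A b • ∑ p ∈ Finset.range (m-b), V p)) := by
    rw [← Finset.sum_sub_distrib, ← Finset.sum_add_distrib]
    exact Finset.sum_congr rfl fun b _ => by rw [smul_add, smul_sub]
  rw [split]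
  -- S1
  have hS1 : ∑ b ∈ Finset.range (m+2), A b • (b : ℝ) • V (b-1)
      = ∑ b ∈ Finset.range (m+1), (A (b+1) * (b+1 : ℝ)) • V b := by
    rw [Finset.sum_range_succ']
    simp [mul_smul]
  -- S2
  have hS2 : ∑ b ∈ Finset.range (m+2), A b • ∑ q ∈ Finset.range b, V q
      = ∑ q ∈ Finset.range (m+1), (∑ b ∈ Finset.Ico (q+1) (m+2), A b) • V q := by
    rw [swapSum, Finset.sum_range_succ]
    simp
  -- S3
  have hS3 : ∑ b ∈ Finset.range (m+2), A b • ∑ p ∈ Finset.range (m-b), V p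
      = ∑ q ∈ Finset.range (m+1), (∑ b ∈ Finset.Ico (q+1) (m+1), A (m-b)) • V q := by
    rw [← Finset.sum_range_reflect (fun b => A b • ∑ p ∈ Finset.range (m-b), V p) (m+2)]
    have h1 : ∀ b ∈ Finset.range (m+2),
        A (m+2-1-b) • ∑ p ∈ Finset.range (m-(m+2-1-b)), V p
          = A (m+1-b) • ∑ p ∈ Finset.range (b-1), V p := by
      intro b hb
      rw [Finset.mem_range] at hb
      have e1 : (m+2-1-b : ℕ) = m+1-b := by omega
      have e2 : (m-(m+1-b) : ℕ) = b-1 := by omega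
      rw [e1, e2]
    rw [Finset.sum_congr rfl h1, Finset.sum_range_succ']
    simp only [Nat.sub_self, Nat.zero_sub, Finset.range_zero, Finset.sum_empty, smul_zero,
      add_zero]
    have h2 : ∀ b ∈ Finset.range (m+1),
        A (m+1-(b+1)) • ∑ p ∈ Finset.range (b+1-1), V p
          = A (m-b) • ∑ p ∈ Finset.range b, V p := by
      intro b hb
      have e1 : (m+1-(b+1) : ℕ) = m-b := by omega
      have e2 : (b+1-1 : ℕ) = b := by omega
      rw [e1, e2]
    rw [Finset.sum_congr rfl h2, swapSum]
  rw [hS1, hS2, hS3, ← Finset.sum_sub_distrib, ← Finset.sum_add_distrib]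
  apply Finset.sum_eq_zero
  intro q hq
  rw [Finset.mem_range] at hq
  have hqm : q ≤ m := by omega
  rw [← sub_smul, ← add_smul]
  convert zero_smul ℝ (V q)
  -- coefficient computation
  have e1 : ∑ b ∈ Finset.Ico (q+1) (m+2), A b = ∑ i ∈ Finset.range (m+1-q), ((i : ℕ) : ℝ) := by
    rw [Finset.sum_Ico_eq_sum_range]
    have er : (m+2-(q+1) : ℕ) = m+1-q := by omega
    rw [er, ← Finset.sum_range_reflect (fun i => ((i : ℕ) : ℝ)) (m+1-q)]
    apply Finset.sum_congr rfl
    intro i hi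
    rw [Finset.mem_range] at hi
    have : (m+1-(q+1+i) : ℕ) = m+1-q-1-i := by omega
    rw [hA]
    simp only []
    rw [this]
  have e3 : ∑ b ∈ Finset.Ico (q+1) (m+1), A (m-b)
      = ∑ i ∈ Finset.range (m-q), ((q+2+i : ℕ) : ℝ) := by
    rw [Finset.sum_Ico_eq_sum_range]
    have er : (m+1-(q+1) : ℕ) = m-q := by omega
    rw [er]
    apply Finset.sum_congr rfl
    intro i hi
    rw [Finset.mem_range] at hi
    have : (m+1-(m-(q+1+i)) : ℕ) = q+2+i := by omega
    rw [hA]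
    simp only []
    rw [this]
  rw [e1, e3, gaussR]
  have hsum2 : ∑ i ∈ Finset.range (m-q), ((q+2+i : ℕ) : ℝ)
      = ((m-q : ℕ) : ℝ) * ((q : ℝ)+2) + ((m-q : ℕ) : ℝ) * (((m-q : ℕ) : ℝ) - 1) / 2 := by
    have h : ∀ i ∈ Finset.range (m-q), ((q+2+i : ℕ) : ℝ) = ((q:ℝ)+2) + (i:ℝ) := by
      intro i _; push_cast; ring
    rw [Finset.sum_congr rfl h, Finset.sum_add_distrib, Finset.sum_const, Finset.card_range,
      nsmul_eq_mul, gaussR]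
  rw [hsum2]
  have c1 : A (q+1) = (m:ℝ) - q := by
    rw [hA]; simp only []
    rw [show (m+1-(q+1) : ℕ) = m - q from by omega, Nat.cast_sub hqm]
  have c2 : ((m+1-q : ℕ) : ℝ) = (m:ℝ) - q + 1 := by
    rw [show (m+1-q : ℕ) = (m-q)+1 from by omega, Nat.cast_add, Nat.cast_sub hqm]; norm_num
  have c3 : ((m-q : ℕ) : ℝ) = (m:ℝ) - q := Nat.cast_sub hqm
  rw [c1, c2, c3]
  ring

theorem keyB (m : ℕ) (V : ℕ → Hq) :
    ∑ b ∈ Finset.range (m+2), ((m+1-b : ℕ) : ℝ) •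
      ((b : ℝ) • V (m-b) + (∑ q ∈ Finset.range b, V q - ∑ p ∈ Finset.range (m-b), V p)) = 0 := by
  have split : ∀ (W : ℕ → Hq),
      ∑ b ∈ Finset.range (m+2), ((m+1-b : ℕ) : ℝ) •
        ((b : ℝ) • W b + (∑ q ∈ Finset.range b, V q - ∑ p ∈ Finset.range (m-b), V p))
      = (∑ b ∈ Finset.range (m+2), ((m+1-b : ℕ) : ℝ) • (b : ℝ) • W b)
        + ∑ b ∈ Finset.range (m+2), ((m+1-b : ℕ) : ℝ) •
            (∑ q ∈ Finset.range b, V q - ∑ p ∈ Finset.range (m-b), V p) := by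
    intro W
    rw [← Finset.sum_add_distrib]
    exact Finset.sum_congr rfl fun b _ => by rw [smul_add]
  have hS1 : ∑ b ∈ Finset.range (m+2), ((m+1-b : ℕ) : ℝ) • (b : ℝ) • V (m-b)
      = ∑ b ∈ Finset.range (m+2), ((m+1-b : ℕ) : ℝ) • (b : ℝ) • V (b-1) := by
    rw [← Finset.sum_range_reflect
      (fun b => ((m+1-b : ℕ) : ℝ) • (b : ℝ) • V (m-b)) (m+2)]
    apply Finset.sum_congr rfl
    intro b hb
    rw [Finset.mem_range] at hb
    rcases Nat.eq_zero_or_pos b with h0 | h1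
    · subst h0; simp
    · have e1 : (m+1-(m+2-1-b) : ℕ) = b := by omega
      have e2 : ((m+2-1-b : ℕ) : ℝ) = ((m+1-b : ℕ) : ℝ) := by
        rw [show (m+2-1-b : ℕ) = m+1-b from by omega]
      have e3 : (m-(m+2-1-b) : ℕ) = b-1 := by omega
      rw [e1, e2, e3, smul_comm]
  rw [split (fun b => V (m-b)), hS1, ← split (fun b => V (b-1)), key]

theorem key2 (m : ℕ) (V : ℕ → Hq) :
    ∑ b ∈ Finset.range (m+2), ((m+1-b : ℕ) : ℝ) •
      ((b : ℝ) • V (b-1) + (∑ q ∈ Finset.range b, V (m-1-q)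
        - ∑ p ∈ Finset.range (m-b), V (m-1-p))) = 0 := by
  have := keyB m (fun k => V (m-1-k))
  rw [← this]
  apply Finset.sum_congr rfl
  intro b hb
  rw [Finset.mem_range] at hb
  rcases Nat.eq_zero_or_pos b with h0 | h1
  · subst h0; simp
  · rcases Nat.lt_or_ge b (m+1) with h2 | h2
    · have e1 : (m-1-(m-b) : ℕ) = b-1 := by omega
      rw [e1]
    · have e1 : (m+1-b : ℕ) = 0 := by omega
      rw [e1]; simp

/-! #### Sandwich corollaries -/

theorem corA (u a w : Hq) :
    ∑ i : Fin 4, u * ee i * a * qe i * w = (2:ℝ) • (u * a * w) + (2:ℝ) • (u * star a * w) := by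
  have h : ∀ i ∈ (Finset.univ : Finset (Fin 4)),
      u * ee i * a * qe i * w = u * ((ee i * a * qe i) * w) := fun i _ => by
    simp [mul_assoc]
  rw [Finset.sum_congr rfl h, ← Finset.mul_sum, ← Finset.sum_mul, sand2]
  simp only [add_mul, smul_mul_assoc, mul_add, mul_smul_comm]
  simp [mul_assoc]

theorem corB (u a w : Hq) :
    ∑ i : Fin 4, u * ee i * a * ee i * w = (-2:ℝ) • (u * star a * w) := by
  have h : ∀ i ∈ (Finset.univ : Finset (Fin 4)),
      u * ee i * a * ee i * w = u * ((ee i * a * ee i) * w) := fun i _ => by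
    simp [mul_assoc]
  rw [Finset.sum_congr rfl h, ← Finset.mul_sum, ← Finset.sum_mul, sand1]
  simp only [smul_mul_assoc, mul_smul_comm]
  simp [mul_assoc]

theorem corC (u a w : Hq) :
    ∑ i : Fin 4, u * qe i * a * ee i * w = (2:ℝ) • (u * a * w) + (2:ℝ) • (u * star a * w) := by
  have h : ∀ i ∈ (Finset.univ : Finset (Fin 4)),
      u * qe i * a * ee i * w = u * ((qe i * a * ee i) * w) := fun i _ => by
    simp [mul_assoc]
  rw [Finset.sum_congr rfl h, ← Finset.mul_sum, ← Finset.sum_mul, sand3]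
  simp only [add_mul, smul_mul_assoc, mul_add, mul_smul_comm]
  simp [mul_assoc]

/-! #### Commutation -/

theorem zw_pow_comm (x : Fin 4 → ℝ) (a b : ℕ) :
    star (Zq x) ^ a * Zq x ^ b = Zq x ^ b * star (Zq x) ^ a := by
  have hc : Commute (star (Zq x)) (Zq x) := star_comm_self' (Zq x)
  exact hc.pow_pow a b

theorem star_wpow (x : Fin 4 → ℝ) (a : ℕ) :
    star (star (Zq x) ^ a) = Zq x ^ a := by rw [star_pow, star_star]

theorem star_zpowq (x : Fin 4 → ℝ) (a : ℕ) :
    star (Zq x ^ a) = star (Zq x) ^ a := star_pow _ _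

/-! #### Derivatives of powers of the conjugate variable -/

theorem pdq_wpow (n : ℕ) (i : Fin 4) (x : Fin 4 → ℝ) :
    pdq i (fun y => star (Zq y) ^ n) x
      = ∑ k ∈ Finset.range n, star (Zq x) ^ k * ee i * star (Zq x) ^ (n-1-k) := by
  rw [(PD.w.pow n).pdq_eq]
  simp only [Zq_single, ee_def]

theorem PD_d1 (n : ℕ) (i : Fin 4) :
    PD (fun x => ∑ k ∈ Finset.range n, star (Zq x) ^ k * ee i * star (Zq x) ^ (n-1-k))
      (fun x v => ∑ k ∈ Finset.range n,
        ((∑ p ∈ Finset.range k, star (Zq x) ^ p * star (Zq v) * star (Zq x) ^ (k-1-p)) * ee i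
            * star (Zq x) ^ (n-1-k)
          + star (Zq x) ^ k * ee i
            * (∑ p ∈ Finset.range (n-1-k),
                star (Zq x) ^ p * star (Zq v) * star (Zq x) ^ (n-1-k-1-p)))) := by
  apply PD.sum
  intro k _
  refine (((PD.w.pow k).mul (PD.const (ee i))).mul (PD.w.pow (n-1-k))).congr
    (fun y => rfl) (fun x v => ?_)
  simp only [mul_zero, add_zero]

theorem pdq2_wpow (n : ℕ) (i : Fin 4) (x : Fin 4 → ℝ) :
    pdq i (pdq i (fun y => star (Zq y) ^ n)) x
      = ∑ k ∈ Finset.range n,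
        ((∑ p ∈ Finset.range k, star (Zq x) ^ p * ee i * star (Zq x) ^ (k-1-p)) * ee i
            * star (Zq x) ^ (n-1-k)
          + star (Zq x) ^ k * ee i
            * (∑ p ∈ Finset.range (n-1-k),
                star (Zq x) ^ p * ee i * star (Zq x) ^ (n-1-k-1-p))) := by
  have hfun : pdq i (fun y => star (Zq y) ^ n)
      = fun x => ∑ k ∈ Finset.range n, star (Zq x) ^ k * ee i * star (Zq x) ^ (n-1-k) :=
    funext (pdq_wpow n i)
  rw [hfun, (PD_d1 n i).pdq_eq]
  simp only [Zq_single, ee_def]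

/-- Closed form of the Laplacian of `(X⁺)ⁿ`. -/
theorem lapq_wpow (n : ℕ) (x : Fin 4 → ℝ) :
    lapq (fun y => star (Zq y) ^ n) x
      = ∑ b ∈ Finset.range n, ((n-1-b : ℕ) : ℝ) •
          ((-4 : ℝ) • (Zq x ^ b * star (Zq x) ^ (n-2-b))) := by
  rw [lapq]
  rw [Finset.sum_congr rfl (fun i (_ : i ∈ Finset.univ) => pdq2_wpow n i x)]
  rw [Finset.sum_comm]
  -- now ∑_k ∑_i (A + B)
  have step1 : ∀ k ∈ Finset.range n,
      ∑ i : Fin 4,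
        ((∑ p ∈ Finset.range k, star (Zq x) ^ p * ee i * star (Zq x) ^ (k-1-p)) * ee i
            * star (Zq x) ^ (n-1-k)
          + star (Zq x) ^ k * ee i
            * (∑ p ∈ Finset.range (n-1-k),
                star (Zq x) ^ p * ee i * star (Zq x) ^ (n-1-k-1-p)))
      = (∑ p ∈ Finset.range k,
          (-2:ℝ) • (Zq x ^ (k-1-p) * star (Zq x) ^ (n-2-(k-1-p))))
        + ∑ p ∈ Finset.range (n-1-k),
          (-2:ℝ) • (Zq x ^ p * star (Zq x) ^ (n-2-p)) := by
    intro k hk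
    rw [Finset.mem_range] at hk
    rw [Finset.sum_add_distrib]
    congr 1
    · -- A part
      have e1 : ∀ i ∈ (Finset.univ : Finset (Fin 4)),
          (∑ p ∈ Finset.range k, star (Zq x) ^ p * ee i * star (Zq x) ^ (k-1-p)) * ee i
              * star (Zq x) ^ (n-1-k)
            = ∑ p ∈ Finset.range k,
              star (Zq x) ^ p * ee i * star (Zq x) ^ (k-1-p) * ee i * star (Zq x) ^ (n-1-k) := by
        intro i _
        rw [Finset.sum_mul, Finset.sum_mul]
      rw [Finset.sum_congr rfl e1, Finset.sum_comm]
      refine Finset.sum_congr rfl fun p hp => ?_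
      rw [Finset.mem_range] at hp
      rw [corB]
      rw [star_wpow]
      -- (-2) • (W^p * Z^{k-1-p} * W^{n-1-k}) = (-2) • (Z^{k-1-p} * W^{n-2-(k-1-p)})
      congr 1
      rw [zw_pow_comm, mul_assoc, ← pow_add]
      congr 2
      omega
    · -- B part
      have e1 : ∀ i ∈ (Finset.univ : Finset (Fin 4)),
          star (Zq x) ^ k * ee i
            * (∑ p ∈ Finset.range (n-1-k),
                star (Zq x) ^ p * ee i * star (Zq x) ^ (n-1-k-1-p))
            = ∑ p ∈ Finset.range (n-1-k),
              star (Zq x) ^ k * ee i * star (Zq x) ^ p * ee i * star (Zq x) ^ (n-1-k-1-p) := by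
        intro i _
        rw [Finset.mul_sum]
        refine Finset.sum_congr rfl fun p _ => ?_
        simp [mul_assoc]
      rw [Finset.sum_congr rfl e1, Finset.sum_comm]
      refine Finset.sum_congr rfl fun p hp => ?_
      rw [Finset.mem_range] at hp
      rw [corB, star_wpow]
      congr 1
      rw [zw_pow_comm, mul_assoc, ← pow_add]
      congr 2
      omega
  rw [Finset.sum_congr rfl step1, Finset.sum_add_distrib]
  rw [count1 n (fun b => (-2:ℝ) • (Zq x ^ b * star (Zq x) ^ (n-2-b)))]
  have c2 : ∑ k ∈ Finset.range n, ∑ p ∈ Finset.range (n-1-k),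
        (-2:ℝ) • (Zq x ^ p * star (Zq x) ^ (n-2-p))
      = ∑ b ∈ Finset.range n, ((n-1-b : ℕ) : ℝ) •
          ((-2:ℝ) • (Zq x ^ b * star (Zq x) ^ (n-2-b))) :=
    count2 n (fun b => (-2:ℝ) • (Zq x ^ b * star (Zq x) ^ (n-2-b)))
  rw [c2, ← Finset.sum_add_distrib]
  refine Finset.sum_congr rfl fun b _ => ?_
  rw [← smul_add, ← smul_add]
  congr 1
  rw [smul_add, ← add_smul]
  norm_num

/-! #### `∇` as sums -/

theorem ee0 : ee 0 = 1 := by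
  simp [ee, qe]

theorem ee1 : ee 1 = -qe 1 := by
  ext <;> simp [ee_re, ee_imI, ee_imJ, ee_imK, qe_re, qe_imI, qe_imJ, qe_imK]

theorem ee2 : ee 2 = -qe 2 := by
  ext <;> simp [ee_re, ee_imI, ee_imJ, ee_imK, qe_re, qe_imI, qe_imJ, qe_imK]

theorem ee3 : ee 3 = -qe 3 := by
  ext <;> simp [ee_re, ee_imI, ee_imJ, ee_imK, qe_re, qe_imI, qe_imJ, qe_imK]

theorem DMinus_ee (f : (Fin 4 → ℝ) → Hq) (x : Fin 4 → ℝ) :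
    DMinus f x = ∑ i : Fin 4, ee i * pdq i f x := by
  rw [Fin.sum_univ_four, ee0, ee1, ee2, ee3, DMinus]
  simp only [one_mul, neg_mul]
  abel

theorem DMinusR_ee (f : (Fin 4 → ℝ) → Hq) (x : Fin 4 → ℝ) :
    DMinusR f x = ∑ i : Fin 4, pdq i f x * ee i := by
  rw [Fin.sum_univ_four, ee0, ee1, ee2, ee3, DMinusR]
  simp only [mul_one, mul_neg]
  abel

/-! #### Derivative of the closed form -/

theorem PD_closed (n : ℕ) :
    PD (fun x => ∑ b ∈ Finset.range n, ((n-1-b : ℕ) : ℝ) •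
          ((-4 : ℝ) • (Zq x ^ b * star (Zq x) ^ (n-2-b))))
      (fun x v => ∑ b ∈ Finset.range n, ((n-1-b : ℕ) : ℝ) •
          ((-4 : ℝ) • ((∑ p ∈ Finset.range b, Zq x ^ p * Zq v * Zq x ^ (b-1-p))
              * star (Zq x) ^ (n-2-b)
            + Zq x ^ b * (∑ p ∈ Finset.range (n-2-b),
                star (Zq x) ^ p * star (Zq v) * star (Zq x) ^ (n-2-b-1-p))))) :=
  PD.sum fun b _ => PD.smul _ (PD.smul _ ((PD.z.pow b).mul (PD.w.pow (n-2-b))))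

/-! #### More sandwich corollaries, in the shapes needed below -/

theorem corA2 (a b' w : Hq) :
    ∑ i : Fin 4, ee i * (a * qe i * b' * w)
      = (2:ℝ) • (a * (b' * w)) + (2:ℝ) • (star a * (b' * w)) := by
  have h : ∀ i ∈ (Finset.univ : Finset (Fin 4)),
      ee i * (a * qe i * b' * w) = 1 * ee i * a * qe i * (b' * w) := fun i _ => by
    simp [mul_assoc]
  rw [Finset.sum_congr rfl h, corA]
  simp [mul_assoc]

theorem corB2 (zb wp w : Hq) :
    ∑ i : Fin 4, ee i * (zb * (wp * ee i * w)) = (-2:ℝ) • (star (zb * wp) * w) := by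
  have h : ∀ i ∈ (Finset.univ : Finset (Fin 4)),
      ee i * (zb * (wp * ee i * w)) = 1 * ee i * (zb * wp) * ee i * w := fun i _ => by
    simp [mul_assoc]
  rw [Finset.sum_congr rfl h, corB]
  simp [mul_assoc]

theorem corC2 (u a w : Hq) :
    ∑ i : Fin 4, u * qe i * a * w * ee i
      = (2:ℝ) • (u * (a * w)) + (2:ℝ) • (u * star (a * w)) := by
  have h : ∀ i ∈ (Finset.univ : Finset (Fin 4)),
      u * qe i * a * w * ee i = u * qe i * (a * w) * ee i * 1 := fun i _ => by
    simp [mul_assoc]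
  rw [Finset.sum_congr rfl h, corC]
  simp [mul_assoc]

theorem corD2 (zb wp w : Hq) :
    ∑ i : Fin 4, zb * (wp * ee i * w) * ee i = (-2:ℝ) • (zb * (wp * star w)) := by
  have h : ∀ i ∈ (Finset.univ : Finset (Fin 4)),
      zb * (wp * ee i * w) * ee i = (zb * wp) * ee i * w * ee i * 1 := fun i _ => by
    simp [mul_assoc]
  rw [Finset.sum_congr rfl h, corB]
  simp [mul_assoc]

/-! #### The left quasi anti regularity -/

set_option maxHeartbeats 2000000 in
theorem DMinus_lapq (n : ℕ) (x : Fin 4 → ℝ) :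
    DMinus (lapq (fun y => star (Zq y) ^ n)) x = 0 := by
  have hfun : lapq (fun y => star (Zq y) ^ n)
      = fun x => ∑ b ∈ Finset.range n, ((n-1-b : ℕ) : ℝ) •
          ((-4 : ℝ) • (Zq x ^ b * star (Zq x) ^ (n-2-b))) := funext (lapq_wpow n)
  rw [hfun, DMinus_ee]
  have hpdq : ∀ j : Fin 4,
      pdq j (fun x => ∑ b ∈ Finset.range n, ((n-1-b : ℕ) : ℝ) •
        ((-4 : ℝ) • (Zq x ^ b * star (Zq x) ^ (n-2-b)))) x
      = ∑ b ∈ Finset.range n, ((n-1-b : ℕ) : ℝ) •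
          ((-4 : ℝ) • ((∑ p ∈ Finset.range b, Zq x ^ p * qe j * Zq x ^ (b-1-p))
              * star (Zq x) ^ (n-2-b)
            + Zq x ^ b * (∑ p ∈ Finset.range (n-2-b),
                star (Zq x) ^ p * ee j * star (Zq x) ^ (n-2-b-1-p)))) := by
    intro j
    rw [(PD_closed n).pdq_eq]
    simp only [Zq_single, ee_def]
  rw [Finset.sum_congr rfl (fun j (_ : j ∈ Finset.univ) => by rw [hpdq j])]
  -- swap the two sums
  have swap : ∑ j : Fin 4, ee j * (∑ b ∈ Finset.range n, ((n-1-b : ℕ) : ℝ) •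
          ((-4 : ℝ) • ((∑ p ∈ Finset.range b, Zq x ^ p * qe j * Zq x ^ (b-1-p))
              * star (Zq x) ^ (n-2-b)
            + Zq x ^ b * (∑ p ∈ Finset.range (n-2-b),
                star (Zq x) ^ p * ee j * star (Zq x) ^ (n-2-b-1-p)))))
      = ∑ b ∈ Finset.range n, ((n-1-b : ℕ) : ℝ) • ((-4 : ℝ) •
          ∑ j : Fin 4, (ee j * ((∑ p ∈ Finset.range b, Zq x ^ p * qe j * Zq x ^ (b-1-p))
              * star (Zq x) ^ (n-2-b))
            + ee j * (Zq x ^ b * (∑ p ∈ Finset.range (n-2-b),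
                star (Zq x) ^ p * ee j * star (Zq x) ^ (n-2-b-1-p))))) := by
    have h1 : ∀ j ∈ (Finset.univ : Finset (Fin 4)),
        ee j * (∑ b ∈ Finset.range n, ((n-1-b : ℕ) : ℝ) •
          ((-4 : ℝ) • ((∑ p ∈ Finset.range b, Zq x ^ p * qe j * Zq x ^ (b-1-p))
              * star (Zq x) ^ (n-2-b)
            + Zq x ^ b * (∑ p ∈ Finset.range (n-2-b),
                star (Zq x) ^ p * ee j * star (Zq x) ^ (n-2-b-1-p)))))
        = ∑ b ∈ Finset.range n, ((n-1-b : ℕ) : ℝ) • ((-4 : ℝ) •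
            (ee j * ((∑ p ∈ Finset.range b, Zq x ^ p * qe j * Zq x ^ (b-1-p))
              * star (Zq x) ^ (n-2-b))
            + ee j * (Zq x ^ b * (∑ p ∈ Finset.range (n-2-b),
                star (Zq x) ^ p * ee j * star (Zq x) ^ (n-2-b-1-p))))) := by
      intro j _
      rw [Finset.mul_sum]
      refine Finset.sum_congr rfl fun b _ => ?_
      rw [mul_smul_comm, mul_smul_comm, mul_add]
    rw [Finset.sum_congr rfl h1, Finset.sum_comm]
    refine Finset.sum_congr rfl fun b _ => ?_
    rw [← Finset.smul_sum, ← Finset.smul_sum]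
  rw [swap]
  -- apply the sandwich identities inside
  have sand : ∀ b ∈ Finset.range n,
      ∑ j : Fin 4, (ee j * ((∑ p ∈ Finset.range b, Zq x ^ p * qe j * Zq x ^ (b-1-p))
              * star (Zq x) ^ (n-2-b))
            + ee j * (Zq x ^ b * (∑ p ∈ Finset.range (n-2-b),
                star (Zq x) ^ p * ee j * star (Zq x) ^ (n-2-b-1-p))))
      = (∑ p ∈ Finset.range b,
          ((2:ℝ) • (Zq x ^ p * (Zq x ^ (b-1-p) * star (Zq x) ^ (n-2-b)))
            + (2:ℝ) • (star (Zq x) ^ p * (Zq x ^ (b-1-p) * star (Zq x) ^ (n-2-b)))))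
        + ∑ p ∈ Finset.range (n-2-b),
            (-2:ℝ) • (Zq x ^ p * star (Zq x) ^ (b + (n-2-b-1-p))) := by
    intro b _
    rw [Finset.sum_add_distrib]
    congr 1
    · -- A part
      have h1 : ∀ j ∈ (Finset.univ : Finset (Fin 4)),
          ee j * ((∑ p ∈ Finset.range b, Zq x ^ p * qe j * Zq x ^ (b-1-p))
              * star (Zq x) ^ (n-2-b))
            = ∑ p ∈ Finset.range b,
                ee j * (Zq x ^ p * qe j * Zq x ^ (b-1-p) * star (Zq x) ^ (n-2-b)) := by
        intro j _
        rw [Finset.sum_mul, Finset.mul_sum]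
      rw [Finset.sum_congr rfl h1, Finset.sum_comm]
      refine Finset.sum_congr rfl fun p _ => ?_
      rw [corA2, star_zpowq]
    · -- B part
      have h1 : ∀ j ∈ (Finset.univ : Finset (Fin 4)),
          ee j * (Zq x ^ b * (∑ p ∈ Finset.range (n-2-b),
                star (Zq x) ^ p * ee j * star (Zq x) ^ (n-2-b-1-p)))
            = ∑ p ∈ Finset.range (n-2-b),
                ee j * (Zq x ^ b * (star (Zq x) ^ p * ee j * star (Zq x) ^ (n-2-b-1-p))) := by
        intro j _
        rw [Finset.mul_sum, Finset.mul_sum]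
      rw [Finset.sum_congr rfl h1, Finset.sum_comm]
      refine Finset.sum_congr rfl fun p _ => ?_
      rw [corB2]
      congr 1
      rw [star_mul, star_wpow, star_zpowq, mul_assoc, ← pow_add]
  rw [Finset.sum_congr rfl (fun b hb => by rw [sand b hb])]
  clear hfun hpdq swap sand
  rcases n with _ | _ | m
  · simp
  · simp
  · -- n = m + 2
    have conv : ∀ b ∈ Finset.range (m+2),
        ((m+2-1-b : ℕ) : ℝ) • ((-4 : ℝ) •
          ((∑ p ∈ Finset.range b,
            ((2:ℝ) • (Zq x ^ p * (Zq x ^ (b-1-p) * star (Zq x) ^ (m+2-2-b)))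
              + (2:ℝ) • (star (Zq x) ^ p * (Zq x ^ (b-1-p) * star (Zq x) ^ (m+2-2-b)))))
          + ∑ p ∈ Finset.range (m+2-2-b),
              (-2:ℝ) • (Zq x ^ p * star (Zq x) ^ (b + (m+2-2-b-1-p)))))
        = ((m+1-b : ℕ) : ℝ) • ((-8 : ℝ) •
            ((b : ℝ) • (Zq x ^ (b-1) * star (Zq x) ^ (m-1-(b-1)))
              + (∑ q ∈ Finset.range b, Zq x ^ q * star (Zq x) ^ (m-1-q)
                - ∑ p ∈ Finset.range (m-b), Zq x ^ p * star (Zq x) ^ (m-1-p)))) := by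
      intro b hb
      rw [Finset.mem_range] at hb
      have hcoef : (m+2-1-b : ℕ) = m+1-b := by omega
      rw [hcoef]
      rcases Nat.lt_or_ge b (m+1) with hbm | hbm
      · -- b ≤ m : the real case
        have hbm' : b ≤ m := by omega
        have hrange : (m+2-2-b : ℕ) = m-b := by omega
        rw [hrange]
        congr 1
        have hSA : ∑ p ∈ Finset.range b,
            ((2:ℝ) • (Zq x ^ p * (Zq x ^ (b-1-p) * star (Zq x) ^ (m-b)))
              + (2:ℝ) • (star (Zq x) ^ p * (Zq x ^ (b-1-p) * star (Zq x) ^ (m-b))))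
            = ∑ p ∈ Finset.range b,
              ((2:ℝ) • (Zq x ^ (b-1) * star (Zq x) ^ (m-1-(b-1)))
                + (2:ℝ) • (Zq x ^ (b-1-p) * star (Zq x) ^ (m-1-(b-1-p)))) := by
          refine Finset.sum_congr rfl fun p hp => ?_
          rw [Finset.mem_range] at hp
          congr 2
          · rw [← mul_assoc, ← pow_add]
            have e1 : p + (b-1-p) = b-1 := by omega
            have e2 : (m-b : ℕ) = m-1-(b-1) := by omega
            rw [e1, e2]
          · rw [← mul_assoc, zw_pow_comm, mul_assoc, ← pow_add]
            have e1 : p + (m-b) = m-1-(b-1-p) := by omega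
            rw [e1]
        have hSB : ∑ p ∈ Finset.range (m-b),
            (-2:ℝ) • (Zq x ^ p * star (Zq x) ^ (b + (m-b-1-p)))
            = ∑ p ∈ Finset.range (m-b),
              (-2:ℝ) • (Zq x ^ p * star (Zq x) ^ (m-1-p)) := by
          refine Finset.sum_congr rfl fun p hp => ?_
          rw [Finset.mem_range] at hp
          have e1 : b + (m-b-1-p) = m-1-p := by omega
          rw [e1]
        rw [hSA, hSB, Finset.sum_add_distrib, Finset.sum_range_reflect
          (fun q => (2:ℝ) • (Zq x ^ q * star (Zq x) ^ (m-1-q))) b]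
        rw [Finset.sum_const, Finset.card_range]
        rw [← Nat.cast_smul_eq_nsmul ℝ b, ← Finset.smul_sum, ← Finset.smul_sum]
        module
      · -- b = m+1 : coefficient is zero
        have h0 : (m+1-b : ℕ) = 0 := by omega
        rw [h0]
        simp
    rw [Finset.sum_congr rfl conv]
    have pull : ∀ b ∈ Finset.range (m+2),
        ((m+1-b : ℕ) : ℝ) • ((-8 : ℝ) •
            ((b : ℝ) • (Zq x ^ (b-1) * star (Zq x) ^ (m-1-(b-1)))
              + (∑ q ∈ Finset.range b, Zq x ^ q * star (Zq x) ^ (m-1-q)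
                - ∑ p ∈ Finset.range (m-b), Zq x ^ p * star (Zq x) ^ (m-1-p))))
        = (-8 : ℝ) • (((m+1-b : ℕ) : ℝ) •
            ((b : ℝ) • (Zq x ^ (b-1) * star (Zq x) ^ (m-1-(b-1)))
              + (∑ q ∈ Finset.range b, Zq x ^ q * star (Zq x) ^ (m-1-q)
                - ∑ p ∈ Finset.range (m-b), Zq x ^ p * star (Zq x) ^ (m-1-p)))) :=
      fun b _ => smul_comm _ _ _
    rw [Finset.sum_congr rfl pull, ← Finset.smul_sum,
      key m (fun k => Zq x ^ k * star (Zq x) ^ (m-1-k)), smul_zero]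

/-! #### The right quasi anti regularity -/

set_option maxHeartbeats 2000000 in
theorem DMinusR_lapq (n : ℕ) (x : Fin 4 → ℝ) :
    DMinusR (lapq (fun y => star (Zq y) ^ n)) x = 0 := by
  have hfun : lapq (fun y => star (Zq y) ^ n)
      = fun x => ∑ b ∈ Finset.range n, ((n-1-b : ℕ) : ℝ) •
          ((-4 : ℝ) • (Zq x ^ b * star (Zq x) ^ (n-2-b))) := funext (lapq_wpow n)
  rw [hfun, DMinusR_ee]
  have hpdq : ∀ j : Fin 4,
      pdq j (fun x => ∑ b ∈ Finset.range n, ((n-1-b : ℕ) : ℝ) •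
        ((-4 : ℝ) • (Zq x ^ b * star (Zq x) ^ (n-2-b)))) x
      = ∑ b ∈ Finset.range n, ((n-1-b : ℕ) : ℝ) •
          ((-4 : ℝ) • ((∑ p ∈ Finset.range b, Zq x ^ p * qe j * Zq x ^ (b-1-p))
              * star (Zq x) ^ (n-2-b)
            + Zq x ^ b * (∑ p ∈ Finset.range (n-2-b),
                star (Zq x) ^ p * ee j * star (Zq x) ^ (n-2-b-1-p)))) := by
    intro j
    rw [(PD_closed n).pdq_eq]
    simp only [Zq_single, ee_def]
  rw [Finset.sum_congr rfl (fun j (_ : j ∈ Finset.univ) => by rw [hpdq j])]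
  -- swap the two sums
  have swap : ∑ j : Fin 4, (∑ b ∈ Finset.range n, ((n-1-b : ℕ) : ℝ) •
          ((-4 : ℝ) • ((∑ p ∈ Finset.range b, Zq x ^ p * qe j * Zq x ^ (b-1-p))
              * star (Zq x) ^ (n-2-b)
            + Zq x ^ b * (∑ p ∈ Finset.range (n-2-b),
                star (Zq x) ^ p * ee j * star (Zq x) ^ (n-2-b-1-p))))) * ee j
      = ∑ b ∈ Finset.range n, ((n-1-b : ℕ) : ℝ) • ((-4 : ℝ) •
          ∑ j : Fin 4, (((∑ p ∈ Finset.range b, Zq x ^ p * qe j * Zq x ^ (b-1-p))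
              * star (Zq x) ^ (n-2-b)) * ee j
            + (Zq x ^ b * (∑ p ∈ Finset.range (n-2-b),
                star (Zq x) ^ p * ee j * star (Zq x) ^ (n-2-b-1-p))) * ee j)) := by
    have h1 : ∀ j ∈ (Finset.univ : Finset (Fin 4)),
        (∑ b ∈ Finset.range n, ((n-1-b : ℕ) : ℝ) •
          ((-4 : ℝ) • ((∑ p ∈ Finset.range b, Zq x ^ p * qe j * Zq x ^ (b-1-p))
              * star (Zq x) ^ (n-2-b)
            + Zq x ^ b * (∑ p ∈ Finset.range (n-2-b),
                star (Zq x) ^ p * ee j * star (Zq x) ^ (n-2-b-1-p))))) * ee j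
        = ∑ b ∈ Finset.range n, ((n-1-b : ℕ) : ℝ) • ((-4 : ℝ) •
            (((∑ p ∈ Finset.range b, Zq x ^ p * qe j * Zq x ^ (b-1-p))
              * star (Zq x) ^ (n-2-b)) * ee j
            + (Zq x ^ b * (∑ p ∈ Finset.range (n-2-b),
                star (Zq x) ^ p * ee j * star (Zq x) ^ (n-2-b-1-p))) * ee j)) := by
      intro j _
      rw [Finset.sum_mul]
      refine Finset.sum_congr rfl fun b _ => ?_
      rw [smul_mul_assoc, smul_mul_assoc, add_mul]
    rw [Finset.sum_congr rfl h1, Finset.sum_comm]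
    refine Finset.sum_congr rfl fun b _ => ?_
    rw [← Finset.smul_sum, ← Finset.smul_sum]
  rw [swap]
  -- apply the sandwich identities inside
  have sand : ∀ b ∈ Finset.range n,
      ∑ j : Fin 4, (((∑ p ∈ Finset.range b, Zq x ^ p * qe j * Zq x ^ (b-1-p))
              * star (Zq x) ^ (n-2-b)) * ee j
            + (Zq x ^ b * (∑ p ∈ Finset.range (n-2-b),
                star (Zq x) ^ p * ee j * star (Zq x) ^ (n-2-b-1-p))) * ee j)
      = (∑ p ∈ Finset.range b,
          ((2:ℝ) • (Zq x ^ p * (Zq x ^ (b-1-p) * star (Zq x) ^ (n-2-b)))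
            + (2:ℝ) • (Zq x ^ (p + (n-2-b)) * star (Zq x) ^ (b-1-p))))
        + ∑ p ∈ Finset.range (n-2-b),
            (-2:ℝ) • (Zq x ^ (b + (n-2-b-1-p)) * star (Zq x) ^ p) := by
    intro b _
    rw [Finset.sum_add_distrib]
    congr 1
    · -- A part
      have h1 : ∀ j ∈ (Finset.univ : Finset (Fin 4)),
          ((∑ p ∈ Finset.range b, Zq x ^ p * qe j * Zq x ^ (b-1-p))
              * star (Zq x) ^ (n-2-b)) * ee j
            = ∑ p ∈ Finset.range b,
                Zq x ^ p * qe j * Zq x ^ (b-1-p) * star (Zq x) ^ (n-2-b) * ee j := by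
        intro j _
        rw [Finset.sum_mul, Finset.sum_mul]
      rw [Finset.sum_congr rfl h1, Finset.sum_comm]
      refine Finset.sum_congr rfl fun p _ => ?_
      rw [corC2]
      congr 1
      rw [star_mul, star_wpow, star_zpowq, ← mul_assoc, ← pow_add]
    · -- B part
      have h1 : ∀ j ∈ (Finset.univ : Finset (Fin 4)),
          (Zq x ^ b * (∑ p ∈ Finset.range (n-2-b),
                star (Zq x) ^ p * ee j * star (Zq x) ^ (n-2-b-1-p))) * ee j
            = ∑ p ∈ Finset.range (n-2-b),
                Zq x ^ b * (star (Zq x) ^ p * ee j * star (Zq x) ^ (n-2-b-1-p)) * ee j := by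
        intro j _
        rw [Finset.mul_sum, Finset.sum_mul]
      rw [Finset.sum_congr rfl h1, Finset.sum_comm]
      refine Finset.sum_congr rfl fun p _ => ?_
      rw [corD2, star_wpow]
      congr 1
      rw [zw_pow_comm, ← mul_assoc, ← pow_add]
  rw [Finset.sum_congr rfl (fun b hb => by rw [sand b hb])]
  clear hfun hpdq swap sand
  rcases n with _ | _ | m
  · simp
  · simp
  · -- n = m + 2
    have conv : ∀ b ∈ Finset.range (m+2),
        ((m+2-1-b : ℕ) : ℝ) • ((-4 : ℝ) •
          ((∑ p ∈ Finset.range b,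
            ((2:ℝ) • (Zq x ^ p * (Zq x ^ (b-1-p) * star (Zq x) ^ (m+2-2-b)))
              + (2:ℝ) • (Zq x ^ (p + (m+2-2-b)) * star (Zq x) ^ (b-1-p))))
          + ∑ p ∈ Finset.range (m+2-2-b),
              (-2:ℝ) • (Zq x ^ (b + (m+2-2-b-1-p)) * star (Zq x) ^ p)))
        = ((m+1-b : ℕ) : ℝ) • ((-8 : ℝ) •
            ((b : ℝ) • (Zq x ^ (b-1) * star (Zq x) ^ (m-1-(b-1)))
              + (∑ q ∈ Finset.range b,
                  Zq x ^ (m-1-q) * star (Zq x) ^ (m-1-(m-1-q))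
                - ∑ p ∈ Finset.range (m-b),
                    Zq x ^ (m-1-p) * star (Zq x) ^ (m-1-(m-1-p))))) := by
      intro b hb
      rw [Finset.mem_range] at hb
      have hcoef : (m+2-1-b : ℕ) = m+1-b := by omega
      rw [hcoef]
      rcases Nat.lt_or_ge b (m+1) with hbm | hbm
      · -- b ≤ m : the real case
        have hbm' : b ≤ m := by omega
        have hrange : (m+2-2-b : ℕ) = m-b := by omega
        rw [hrange]
        congr 1
        have hSA : ∑ p ∈ Finset.range b,
            ((2:ℝ) • (Zq x ^ p * (Zq x ^ (b-1-p) * star (Zq x) ^ (m-b)))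
              + (2:ℝ) • (Zq x ^ (p + (m-b)) * star (Zq x) ^ (b-1-p)))
            = ∑ p ∈ Finset.range b,
              ((2:ℝ) • (Zq x ^ (b-1) * star (Zq x) ^ (m-1-(b-1)))
                + (2:ℝ) • (Zq x ^ (m-1-(b-1-p))
                    * star (Zq x) ^ (m-1-(m-1-(b-1-p))))) := by
          refine Finset.sum_congr rfl fun p hp => ?_
          rw [Finset.mem_range] at hp
          congr 2
          · rw [← mul_assoc, ← pow_add]
            have e1 : p + (b-1-p) = b-1 := by omega
            have e2 : (m-b : ℕ) = m-1-(b-1) := by omega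
            rw [e1, e2]
          · have e1 : p + (m-b) = m-1-(b-1-p) := by omega
            have e2 : (b-1-p : ℕ) = m-1-(m-1-(b-1-p)) := by omega
            rw [e1, ← e2]
        have hSB : ∑ p ∈ Finset.range (m-b),
            (-2:ℝ) • (Zq x ^ (b + (m-b-1-p)) * star (Zq x) ^ p)
            = ∑ p ∈ Finset.range (m-b),
              (-2:ℝ) • (Zq x ^ (m-1-p) * star (Zq x) ^ (m-1-(m-1-p))) := by
          refine Finset.sum_congr rfl fun p hp => ?_
          rw [Finset.mem_range] at hp
          have e1 : b + (m-b-1-p) = m-1-p := by omega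
          have e2 : (p : ℕ) = m-1-(m-1-p) := by omega
          rw [e1, ← e2]
        rw [hSA, hSB, Finset.sum_add_distrib, Finset.sum_range_reflect
          (fun q => (2:ℝ) • (Zq x ^ (m-1-q) * star (Zq x) ^ (m-1-(m-1-q)))) b]
        rw [Finset.sum_const, Finset.card_range]
        rw [← Nat.cast_smul_eq_nsmul ℝ b, ← Finset.smul_sum, ← Finset.smul_sum]
        module
      · -- b = m+1 : coefficient is zero
        have h0 : (m+1-b : ℕ) = 0 := by omega
        rw [h0]
        simp
    rw [Finset.sum_congr rfl conv]
    have pull : ∀ b ∈ Finset.range (m+2),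
        ((m+1-b : ℕ) : ℝ) • ((-8 : ℝ) •
            ((b : ℝ) • (Zq x ^ (b-1) * star (Zq x) ^ (m-1-(b-1)))
              + (∑ q ∈ Finset.range b,
                  Zq x ^ (m-1-q) * star (Zq x) ^ (m-1-(m-1-q))
                - ∑ p ∈ Finset.range (m-b),
                    Zq x ^ (m-1-p) * star (Zq x) ^ (m-1-(m-1-p)))))
        = (-8 : ℝ) • (((m+1-b : ℕ) : ℝ) •
            ((b : ℝ) • (Zq x ^ (b-1) * star (Zq x) ^ (m-1-(b-1)))
              + (∑ q ∈ Finset.range b,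
                  Zq x ^ (m-1-q) * star (Zq x) ^ (m-1-(m-1-q))
                - ∑ p ∈ Finset.range (m-b),
                    Zq x ^ (m-1-p) * star (Zq x) ^ (m-1-(m-1-p))))) :=
      fun b _ => smul_comm _ _ _
    rw [Finset.sum_congr rfl pull, ← Finset.smul_sum,
      key2 m (fun k => Zq x ^ k * star (Zq x) ^ (m-1-k)), smul_zero]

/-- for every `n ∈ ℕ`, the function `X ↦ (X⁺)ⁿ` satisfies
`∇□(X⁺)ⁿ = 0` and `(□(X⁺)ⁿ)∇ = 0`, i.e. it is quasi anti regular from both sides. -/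
theorem conj_pow_quasi_anti_regular (n : ℕ) :
    (∀ x : Fin 4 → ℝ, DMinus (lapq (fun y => (star (Zq y)) ^ n)) x = 0) ∧
    (∀ x : Fin 4 → ℝ, DMinusR (lapq (fun y => (star (Zq y)) ^ n)) x = 0) := by
  exact ⟨DMinus_lapq n, DMinusR_lapq n⟩
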